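/- arXiv:1307.0203 — 5 statements merged into one kernel-verified Lean document; each statement's English description precedes it below -/
import Mathlib

section
/- (Triangulated Schanuel's lemma) Let X →f M →g N → X[1] and X →f' M' →g' N' → X[1] be distinguished triangles in a triangulated category such that the induced maps Hom(M, M') → Hom(X, M') (composition with f) and Hom(M', M) → Hom(X, M) (composition with f') are surjective. Then M ⊕ N' ≅ M' ⊕ N. -/
open CategoryTheory Limits Pretriangulated ZeroObject

universe v u

section Aux

variable {C : Type u} [Category.{v} C] [Preadditive C] [HasZeroObject C]
    [HasShift C ℤ] [∀ n : ℤ, (shiftFunctor C n).Additive] [Pretriangulated C]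

lemma aux_zero_triangle_dist (W : C) :
    Triangle.mk (0 : (0 : C) ⟶ W) (𝟙 W) (0 : W ⟶ (0 : C)⟦(1 : ℤ)⟧) ∈ distTriang C := by
  change Triangle.mk' _ _ _ (0 : (0 : C) ⟶ W) (𝟙 W) (0 : W ⟶ (0 : C)⟦(1 : ℤ)⟧) ∈ distTriang C
  refine isomorphic_distinguished _ (binaryBiproductTriangle_distinguished (0 : C) W) _ ?_
  refine Triangle.isoMk _ _ (Iso.refl _)
    ⟨biprod.inr, biprod.snd, biprod.inr_snd, ?_⟩ (Iso.refl _) ?_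
    ((Category.id_comp _).trans biprod.inr_snd.symm) (by simp [binaryBiproductTriangle, Triangle.mk])
  · apply biprod.hom_ext'
    · apply (isZero_zero C).eq_of_src
    · exact (biprod.inr_snd_assoc _).trans (Category.comp_id _).symm
  · apply (isZero_zero C).eq_of_src

lemma aux_sum_dist {X M N : C} (f : X ⟶ M) (g : M ⟶ N) (h : N ⟶ X⟦(1 : ℤ)⟧)
    (hT : Triangle.mk f g h ∈ distTriang C) (W : C) :
    Triangle.mk (biprod.lift f (0 : X ⟶ W)) (biprod.map g (𝟙 W))
      (biprod.desc h 0) ∈ distTriang C := by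
  let T : WalkingPair → Triangle C := fun j =>
    WalkingPair.casesOn j (Triangle.mk' _ _ _ f g h)
      (Triangle.mk' _ _ _ (0 : (0 : C) ⟶ W) (𝟙 W) (0 : W ⟶ (0 : C)⟦(1 : ℤ)⟧))
  have hTall : ∀ j, T j ∈ distTriang C := by
    rintro (_ | _)
    · exact hT
    · exact aux_zero_triangle_dist W
  change Triangle.mk' _ _ _ (biprod.lift f (0 : X ⟶ W)) (biprod.map g (𝟙 W))
        (biprod.desc h 0) ∈ distTriang C
  refine isomorphic_distinguished _ (productTriangle_distinguished T hTall) _ ?_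
  let e₁ : X ≅ ∏ᶜ fun j => (T j).obj₁ :=
    { hom := Pi.lift (f := fun j => (T j).obj₁) (fun j => WalkingPair.casesOn j (𝟙 X) 0)
      inv := Pi.π _ WalkingPair.left
      hom_inv_id := by simp [T]
      inv_hom_id := by
        apply Pi.hom_ext
        rintro (_ | _)
        · simp [T]
        · exact (isZero_zero C).eq_of_tgt _ _ }
  let e₂ : M ⊞ W ≅ ∏ᶜ fun j => (T j).obj₂ :=
    { hom := Pi.lift (f := fun j => (T j).obj₂) (fun j => WalkingPair.casesOn j biprod.fst biprod.snd)
      inv := biprod.lift (Pi.π _ WalkingPair.left) (Pi.π _ WalkingPair.right)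
      hom_inv_id := by apply biprod.hom_ext <;> simp [T]
      inv_hom_id := by
        apply Pi.hom_ext
        rintro (_ | _) <;> simp [T] }
  let e₃ : N ⊞ W ≅ ∏ᶜ fun j => (T j).obj₃ :=
    { hom := Pi.lift (f := fun j => (T j).obj₃) (fun j => WalkingPair.casesOn j biprod.fst biprod.snd)
      inv := biprod.lift (Pi.π _ WalkingPair.left) (Pi.π _ WalkingPair.right)
      hom_inv_id := by apply biprod.hom_ext <;> simp [T]
      inv_hom_id := by
        apply Pi.hom_ext
        rintro (_ | _) <;> simp [T] }
  refine Triangle.isoMk _ _ e₁ e₂ e₃ ?_ ?_ ?_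
  · apply Pi.hom_ext
    rintro (_ | _)
    · simp [Triangle.mk, productTriangle, e₁, e₂, T]
    · simp [Triangle.mk, productTriangle, e₁, e₂, T]
  · apply Pi.hom_ext
    rintro (_ | _)
    · simp [Triangle.mk, productTriangle, e₂, e₃, T]
    · simp [Triangle.mk, productTriangle, e₂, e₃, T]
  · dsimp only [Triangle.mk_mor₃, productTriangle, Triangle.mk]
    rw [← cancel_mono (piComparison (shiftFunctor C (1 : ℤ)) (fun j => (T j).obj₁))]
    simp only [Category.assoc, IsIso.inv_hom_id, Category.comp_id]
    apply Pi.hom_ext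
    rintro (_ | _)
    · rw [Category.assoc, Category.assoc, piComparison_comp_π, ← Functor.map_comp]
      have h1 : e₁.hom ≫ Pi.π (fun j => (T j).obj₁) WalkingPair.left = 𝟙 X := by simp [e₁]
      rw [h1]
      apply biprod.hom_ext' <;> simp [e₃, T]
    · rw [Category.assoc, Category.assoc, piComparison_comp_π, ← Functor.map_comp]
      have h1 : e₁.hom ≫ Pi.π (fun j => (T j).obj₁) WalkingPair.right = 0 := by simp [e₁]
      rw [h1]
      apply biprod.hom_ext' <;> simp [e₃, T]

end Aux

/-- triangulated Schanuel's lemma: given distinguished triangles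
`X →f M →g N → X⟦1⟧` and `X →f' M' →g' N' → X⟦1⟧` such that precomposition with `f`
gives a surjection `Hom(M, M') → Hom(X, M')` and precomposition with `f'` gives a
surjection `Hom(M', M) → Hom(X, M)`, one has `M ⊞ N' ≅ M' ⊞ N`. -/
theorem stmt1 {C : Type u} [Category.{v} C] [Preadditive C] [HasZeroObject C]
    [HasShift C ℤ] [∀ n : ℤ, (shiftFunctor C n).Additive] [Pretriangulated C]
    [HasBinaryBiproducts C]
    (X M N M' N' : C)
    (f : X ⟶ M) (g : M ⟶ N) (h : N ⟶ X⟦(1 : ℤ)⟧)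
    (f' : X ⟶ M') (g' : M' ⟶ N') (h' : N' ⟶ X⟦(1 : ℤ)⟧)
    (hT : Triangle.mk f g h ∈ distTriang C)
    (hT' : Triangle.mk f' g' h' ∈ distTriang C)
    (hsurj : ∀ u : X ⟶ M', ∃ v : M ⟶ M', f ≫ v = u)
    (hsurj' : ∀ u : X ⟶ M, ∃ v : M' ⟶ M, f' ≫ v = u) :
    Nonempty (M ⊞ N' ≅ M' ⊞ N) := by
  obtain ⟨v, hv⟩ := hsurj f'
  obtain ⟨v', hv'⟩ := hsurj' f
  have hA := aux_sum_dist f g h hT M'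
  have hB := aux_sum_dist f' g' h' hT' M
  have hE : (biprod.lift (biprod.desc v (𝟙 M')) (biprod.desc (𝟙 M - v ≫ v') (-v')) :
      M ⊞ M' ⟶ M' ⊞ M) ≫
      (biprod.lift (biprod.desc v' (𝟙 M)) (biprod.desc (𝟙 M' - v' ≫ v) (-v)) :
      M' ⊞ M ⟶ M ⊞ M') = 𝟙 _ := by
    apply biprod.hom_ext' <;> apply biprod.hom_ext <;>
      simp [Preadditive.comp_sub, Preadditive.sub_comp]
  have hE' : (biprod.lift (biprod.desc v' (𝟙 M)) (biprod.desc (𝟙 M' - v' ≫ v) (-v)) :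
      M' ⊞ M ⟶ M ⊞ M') ≫
      (biprod.lift (biprod.desc v (𝟙 M')) (biprod.desc (𝟙 M - v ≫ v') (-v')) :
      M ⊞ M' ⟶ M' ⊞ M) = 𝟙 _ := by
    apply biprod.hom_ext' <;> apply biprod.hom_ext <;>
      simp [Preadditive.comp_sub, Preadditive.sub_comp]
  let e₂ : M ⊞ M' ≅ M' ⊞ M :=
    ⟨biprod.lift (biprod.desc v (𝟙 M')) (biprod.desc (𝟙 M - v ≫ v') (-v')),
     biprod.lift (biprod.desc v' (𝟙 M)) (biprod.desc (𝟙 M' - v' ≫ v) (-v)), hE, hE'⟩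
  have comm : (Triangle.mk (biprod.lift f (0 : X ⟶ M')) (biprod.map g (𝟙 M'))
      (biprod.desc h 0)).mor₁ ≫ e₂.hom =
      (Iso.refl X).hom ≫ (Triangle.mk (biprod.lift f' (0 : X ⟶ M)) (biprod.map g' (𝟙 M))
      (biprod.desc h' 0)).mor₁ := by
    apply biprod.hom_ext
    · simp [Triangle.mk, e₂, hv]
    · simp only [Triangle.mk, Triangle.mk_mor₁, Iso.refl_hom, Category.id_comp, Category.assoc, e₂]
      simp [Preadditive.comp_sub, reassoc_of% hv, hv']
  have eT := isoTriangleOfIso₁₂ _ _ hA hB (Iso.refl X) e₂ comm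
  have e₃ : N ⊞ M' ≅ N' ⊞ M := Triangle.π₃.mapIso eT
  exact ⟨biprod.braiding M N' ≪≫ e₃.symm ≪≫ biprod.braiding N M'⟩
end

section
/- Let M be a semi-selforthogonal object in a triangulated category and let X be the class of objects X ∈ M^{⊥_{k>0}} admitting triangles X_{i+1} → M_i → X_i → (i ≥ 0, X_0 = X) with all M_i ∈ add(M) and all X_i ∈ M^{⊥_{k>0}}. Then X is closed under direct summands: if V = U ⊕ W belongs to X, then both U and W belong to X. -/
open CategoryTheory Limits Pretriangulated ZeroObject

set_option linter.unusedSectionVars false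

universe v u

variable {C : Type u} [Category.{v} C] [Preadditive C] [HasZeroObject C]
  [HasShift C ℤ] [∀ n : ℤ, (shiftFunctor C n).Additive] [Pretriangulated C]
  [HasFiniteBiproducts C]

/-- `X ∈ add M`: `X` is a direct summand of a finite direct sum of copies of `M`. -/
def inAdd (M X : C) : Prop :=
  ∃ (n : ℕ) (s : X ⟶ ⨁ (fun _ : Fin n => M)) (p : (⨁ (fun _ : Fin n => M)) ⟶ X),
    s ≫ p = 𝟙 X

/-- `M^{⊥_{k>0}}`. -/
def rightPerp (M : C) : Set C :=
  {N : C | ∀ k : ℤ, 0 < k → ∀ f : M ⟶ N⟦k⟧, f = 0}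

/-- The class `X` of objects `X ∈ M^{⊥_{k>0}}` admitting triangles
`X_{i+1} → M_i → X_i →` (`X_0 = X`) with all `M_i ∈ add M` and all `X_i ∈ M^{⊥_{k>0}}`. -/
def auslanderClass (M : C) : Set C :=
  {X : C | ∃ Xs : ℕ → C, Xs 0 = X ∧ ∀ i : ℕ, Xs i ∈ rightPerp M ∧
    ∃ (Mi : C) (_ : inAdd M Mi) (u : Xs (i + 1) ⟶ Mi) (v : Mi ⟶ Xs i)
      (w : Xs i ⟶ (Xs (i + 1))⟦(1 : ℤ)⟧), Triangle.mk u v w ∈ distTriang C}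

section Aux

variable {M : C}

lemma retract_rightPerp {U V : C} (s : U ⟶ V) (p : V ⟶ U) (hsp : s ≫ p = 𝟙 U)
    (hV : V ∈ rightPerp M) : U ∈ rightPerp M := by
  intro k hk f
  have h1 : f ≫ (shiftFunctor C k).map s = 0 := hV k hk _
  calc f = f ≫ (shiftFunctor C k).map (s ≫ p) := by rw [hsp]; simp
    _ = (f ≫ (shiftFunctor C k).map s) ≫ (shiftFunctor C k).map p := by
        rw [Functor.map_comp, Category.assoc]
    _ = 0 := by rw [h1, zero_comp]

lemma biproduct_self_mem_rightPerp (hM : ∀ k : ℤ, 0 < k → ∀ f : M ⟶ M⟦k⟧, f = 0) (n : ℕ) :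
    (⨁ (fun _ : Fin n => M)) ∈ rightPerp M := by
  intro k hk f
  have : f ≫ (shiftFunctor C k).map (𝟙 _) = f := by simp
  rw [← this, ← biproduct.total, Functor.map_sum, Preadditive.comp_sum]
  refine Finset.sum_eq_zero fun j _ => ?_
  rw [Functor.map_comp, ← Category.assoc, hM k hk (f ≫ (shiftFunctor C k).map (biproduct.π _ j)),
    zero_comp]

lemma inAdd_mem_rightPerp (hM : ∀ k : ℤ, 0 < k → ∀ f : M ⟶ M⟦k⟧, f = 0) {N : C}
    (hN : inAdd M N) : N ∈ rightPerp M := by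
  obtain ⟨n, s, p, hsp⟩ := hN
  exact retract_rightPerp s p hsp (biproduct_self_mem_rightPerp hM n)

lemma hom_from_inAdd_eq_zero {N Z : C} (hN : inAdd M N) (hZ : Z ∈ rightPerp M)
    {k : ℤ} (hk : 0 < k) (f : N ⟶ Z⟦k⟧) : f = 0 := by
  obtain ⟨n, s, p, hsp⟩ := hN
  have hp : p ≫ f = 0 := by
    apply biproduct.hom_ext'
    intro j
    rw [comp_zero, ← Category.assoc]
    exact hZ k hk _
  calc f = s ≫ p ≫ f := by rw [← Category.assoc, hsp, Category.id_comp]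
    _ = 0 := by rw [hp, comp_zero]

lemma biprod_mem_rightPerp {A B : C} (hA : A ∈ rightPerp M) (hB : B ∈ rightPerp M) :
    (A ⊞ B) ∈ rightPerp M := by
  intro k hk f
  have : f ≫ (shiftFunctor C k).map (𝟙 _) = f := by simp
  rw [← this, ← biprod.total, Functor.map_add, Preadditive.comp_add]
  rw [Functor.map_comp, Functor.map_comp, ← Category.assoc, ← Category.assoc,
    hA k hk (f ≫ (shiftFunctor C k).map biprod.fst),
    hB k hk (f ≫ (shiftFunctor C k).map biprod.snd), zero_comp, zero_comp, add_zero]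

lemma zero_mem_rightPerp : (0 : C) ∈ rightPerp M := by
  intro k hk f
  have : IsZero ((0 : C)⟦k⟧) := (shiftFunctor C k).map_isZero (isZero_zero C)
  exact this.eq_of_tgt f 0

lemma inAdd_zero : inAdd M (0 : C) :=
  ⟨0, 0, 0, by rw [Limits.id_zero, comp_zero]⟩

end Aux

section Add

variable {M : C}

lemma inAdd_biprod {N₁ N₂ : C} (h₁ : inAdd M N₁) (h₂ : inAdd M N₂) : inAdd M (N₁ ⊞ N₂) := by
  obtain ⟨n, s₁, p₁, hsp₁⟩ := h₁
  obtain ⟨m, s₂, p₂, hsp₂⟩ := h₂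
  let j₁ : (⨁ (fun _ : Fin n => M)) ⟶ ⨁ (fun _ : Fin (n + m) => M) :=
    biproduct.desc (fun i => biproduct.ι (fun _ : Fin (n + m) => M) (Fin.castAdd m i))
  let q₁ : (⨁ (fun _ : Fin (n + m) => M)) ⟶ ⨁ (fun _ : Fin n => M) :=
    biproduct.lift (fun i => biproduct.π (fun _ : Fin (n + m) => M) (Fin.castAdd m i))
  let j₂ : (⨁ (fun _ : Fin m => M)) ⟶ ⨁ (fun _ : Fin (n + m) => M) :=
    biproduct.desc (fun i => biproduct.ι (fun _ : Fin (n + m) => M) (Fin.natAdd n i))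
  let q₂ : (⨁ (fun _ : Fin (n + m) => M)) ⟶ ⨁ (fun _ : Fin m => M) :=
    biproduct.lift (fun i => biproduct.π (fun _ : Fin (n + m) => M) (Fin.natAdd n i))
  have hj₁q₁ : j₁ ≫ q₁ = 𝟙 _ := by
    apply biproduct.hom_ext'; intro i
    apply biproduct.hom_ext; intro i'
    simp only [j₁, q₁, Category.assoc, biproduct.ι_desc_assoc, biproduct.lift_π,
      biproduct.ι_π, Category.comp_id, Category.id_comp]
    by_cases h : i = i'
    · subst h; simp
    · rw [dif_neg h, dif_neg (by simpa [Fin.ext_iff] using h)]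
  have hj₂q₂ : j₂ ≫ q₂ = 𝟙 _ := by
    apply biproduct.hom_ext'; intro i
    apply biproduct.hom_ext; intro i'
    simp only [j₂, q₂, Category.assoc, biproduct.ι_desc_assoc, biproduct.lift_π,
      biproduct.ι_π, Category.comp_id, Category.id_comp]
    by_cases h : i = i'
    · subst h; simp
    · rw [dif_neg h, dif_neg (by simpa [Fin.ext_iff] using h)]
  have hj₁q₂ : j₁ ≫ q₂ = 0 := by
    apply biproduct.hom_ext'; intro i
    apply biproduct.hom_ext; intro i'
    simp only [j₁, q₂, Category.assoc, biproduct.ι_desc_assoc, biproduct.lift_π,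
      comp_zero, zero_comp, biproduct.ι_π]
    rw [dif_neg]
    intro h
    have := congrArg Fin.val h
    simp [Fin.castAdd, Fin.natAdd] at this
    omega
  have hj₂q₁ : j₂ ≫ q₁ = 0 := by
    apply biproduct.hom_ext'; intro i
    apply biproduct.hom_ext; intro i'
    simp only [j₂, q₁, Category.assoc, biproduct.ι_desc_assoc, biproduct.lift_π,
      comp_zero, zero_comp, biproduct.ι_π]
    rw [dif_neg]
    intro h
    have := congrArg Fin.val h
    simp [Fin.castAdd, Fin.natAdd] at this
    omega
  refine ⟨n + m, biprod.desc (s₁ ≫ j₁) (s₂ ≫ j₂), biprod.lift (q₁ ≫ p₁) (q₂ ≫ p₂), ?_⟩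
  apply biprod.hom_ext'
  · apply biprod.hom_ext
    · simp [Category.assoc, hj₁q₁, hsp₁, reassoc_of% hj₁q₁]
    · simp [Category.assoc, reassoc_of% hj₁q₂]
  · apply biprod.hom_ext
    · simp [Category.assoc, reassoc_of% hj₂q₁]
    · simp [Category.assoc, hsp₂, reassoc_of% hj₂q₂]

end Add

section BiprodTriangle

/-- iso between a binary biproduct and a product indexed by `Bool`. -/
noncomputable def biprodPiBoolIso (F : Bool → C) [HasProduct F] : F true ⊞ F false ≅ ∏ᶜ F where
  hom := Pi.lift (fun b => Bool.rec (biprod.snd) (biprod.fst) b)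
  inv := biprod.lift (Pi.π F true) (Pi.π F false)
  hom_inv_id := by
    apply biprod.hom_ext
    · simp
    · simp
  inv_hom_id := by
    apply Pi.hom_ext
    intro b
    cases b <;> simp

lemma exists_biprod_triangle {A₁ B₁ C₁ A₂ B₂ C₂ : C}
    (u₁ : A₁ ⟶ B₁) (v₁ : B₁ ⟶ C₁) (w₁ : C₁ ⟶ A₁⟦(1 : ℤ)⟧)
    (u₂ : A₂ ⟶ B₂) (v₂ : B₂ ⟶ C₂) (w₂ : C₂ ⟶ A₂⟦(1 : ℤ)⟧)
    (h₁ : Triangle.mk u₁ v₁ w₁ ∈ distTriang C) (h₂ : Triangle.mk u₂ v₂ w₂ ∈ distTriang C) :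
    ∃ (u : A₁ ⊞ A₂ ⟶ B₁ ⊞ B₂) (v : B₁ ⊞ B₂ ⟶ C₁ ⊞ C₂) (w : C₁ ⊞ C₂ ⟶ (A₁ ⊞ A₂)⟦(1 : ℤ)⟧),
      Triangle.mk u v w ∈ distTriang C := by
  let TT : Bool → Triangle C := fun b => Bool.rec (Triangle.mk u₂ v₂ w₂) (Triangle.mk u₁ v₁ w₁) b
  have hP : productTriangle TT ∈ distTriang C :=
    productTriangle_distinguished TT (fun b => by cases b <;> assumption)
  let e₁ : A₁ ⊞ A₂ ≅ ∏ᶜ (fun b => (TT b).obj₁) := biprodPiBoolIso (fun b => (TT b).obj₁)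
  let e₂ : B₁ ⊞ B₂ ≅ ∏ᶜ (fun b => (TT b).obj₂) := biprodPiBoolIso (fun b => (TT b).obj₂)
  let e₃ : C₁ ⊞ C₂ ≅ ∏ᶜ (fun b => (TT b).obj₃) := biprodPiBoolIso (fun b => (TT b).obj₃)
  refine ⟨e₁.hom ≫ (productTriangle TT).mor₁ ≫ e₂.inv,
    e₂.hom ≫ (productTriangle TT).mor₂ ≫ e₃.inv,
    e₃.hom ≫ (productTriangle TT).mor₃ ≫ (shiftFunctor C (1 : ℤ)).map e₁.inv,
    isomorphic_distinguished _ hP _ ?_⟩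
  refine Triangle.isoMk _ _ e₁ e₂ e₃ ?_ ?_ ?_
  · simp; exact (Category.assoc _ _ _).trans (congrArg (e₁.hom ≫ ·) ((Category.assoc _ _ _).trans ((congrArg _ e₂.inv_hom_id).trans (Category.comp_id _))))
  · simp; exact (Category.assoc _ _ _).trans (congrArg (e₂.hom ≫ ·) ((Category.assoc _ _ _).trans ((congrArg _ e₃.inv_hom_id).trans (Category.comp_id _))))
  · change (e₃.hom ≫ (productTriangle TT).mor₃ ≫ (shiftFunctor C (1 : ℤ)).map e₁.inv) ≫ (shiftFunctor C (1 : ℤ)).map e₁.hom = _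
    exact (Category.assoc _ _ _).trans (congrArg (e₃.hom ≫ ·) ((Category.assoc _ _ _).trans ((congrArg _ ((Functor.map_comp _ _ _).symm.trans ((congrArg _ e₁.inv_hom_id).trans (CategoryTheory.Functor.map_id _ _)))).trans (Category.comp_id _))))

end BiprodTriangle

section Perp3

lemma rightPerp_two_of_three {M A B Z : C} {u : A ⟶ B} {v : B ⟶ Z} {w : Z ⟶ A⟦(1 : ℤ)⟧}
    (hT : Triangle.mk u v w ∈ distTriang C) (hB : B ∈ rightPerp M) (hZ : Z ∈ rightPerp M)
    (hsurj : ∀ g : M ⟶ Z, ∃ h : M ⟶ B, h ≫ v = g) : A ∈ rightPerp M := by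
  intro k hk f
  rcases eq_or_lt_of_le (by omega : (1 : ℤ) ≤ k) with h1 | h2
  · subst h1
    have hTR := rot_of_distTriang _ hT
    obtain ⟨g, hg⟩ := Triangle.coyoneda_exact₃ _ hTR f (by
      dsimp [Triangle.rotate]
      erw [Preadditive.comp_neg, hB 1 one_pos (f ≫ (shiftFunctor C (1 : ℤ)).map u), neg_zero]; rfl)
    dsimp [Triangle.rotate] at hg
    obtain ⟨h, hh⟩ := hsurj g
    erw [hg, ← hh, Category.assoc,
      show v ≫ w = 0 from comp_distTriang_mor_zero₂₃ _ hT, comp_zero]; rfl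
  · set n : ℤ := k - 1 with hn
    have hn1 : 0 < n := by omega
    have h1n : (1 : ℤ) + n = k := by omega
    have hTS := Triangle.shift_distinguished _ (rot_of_distTriang _ hT) n
    have hB1 : ∀ g : M ⟶ (B⟦n⟧)⟦(1 : ℤ)⟧, g = 0 := by
      intro g
      have h0 : g ≫ (shiftFunctorAdd' C n 1 k (by omega)).inv.app B = 0 := hB k hk _
      calc g = (g ≫ (shiftFunctorAdd' C n 1 k (by omega)).inv.app B) ≫
            (shiftFunctorAdd' C n 1 k (by omega)).hom.app B := by simp
        _ = 0 := by rw [h0, zero_comp]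
    obtain ⟨g, hg⟩ := Triangle.coyoneda_exact₃ _ hTS
      (f ≫ (shiftFunctorAdd' C 1 n k h1n).hom.app A) (hB1 _)
    have hg0 : g = 0 := hZ n hn1 g
    rw [hg0, zero_comp] at hg
    calc f = (f ≫ (shiftFunctorAdd' C 1 n k h1n).hom.app A) ≫
        (shiftFunctorAdd' C 1 n k h1n).inv.app A := by simp
      _ = 0 := by erw [hg, zero_comp]

end Perp3

section Ausl

lemma mem_rightPerp_of_mem_ausl {M V : C} (hV : V ∈ auslanderClass M) : V ∈ rightPerp M := by
  obtain ⟨Xs, h0, h⟩ := hV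
  rw [← h0]
  exact (h 0).1

lemma inAdd_mem_ausl {M : C} (hM : ∀ k : ℤ, 0 < k → ∀ f : M ⟶ M⟦k⟧, f = 0) {N : C}
    (hN : inAdd M N) : N ∈ auslanderClass M := by
  refine ⟨fun i => match i with | 0 => N | _ + 1 => (0 : C), rfl, fun i => ?_⟩
  match i with
  | 0 =>
    exact ⟨inAdd_mem_rightPerp hM hN, N, hN, 0, 𝟙 N, 0, contractible_distinguished₁ N⟩
  | i + 1 =>
    exact ⟨zero_mem_rightPerp, 0, inAdd_zero, 0, 𝟙 (0 : C), 0,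
      contractible_distinguished₁ (0 : C)⟩

lemma ausl_biprod {M A B : C} (hA : A ∈ auslanderClass M) (hB : B ∈ auslanderClass M) :
    (A ⊞ B) ∈ auslanderClass M := by
  obtain ⟨Xs, h0, hX⟩ := hA
  obtain ⟨Ys, k0, hY⟩ := hB
  subst h0
  subst k0
  refine ⟨fun i => Xs i ⊞ Ys i, rfl, fun i => ?_⟩
  obtain ⟨hpx, Mi, hMi, u, v, w, hT⟩ := hX i
  obtain ⟨hpy, Ni, hNi, u', v', w', hT'⟩ := hY i
  obtain ⟨uu, vv, ww, hD⟩ := exists_biprod_triangle u v w u' v' w' hT hT'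
  exact ⟨biprod_mem_rightPerp hpx hpy, Mi ⊞ Ni, inAdd_biprod hMi hNi, uu, vv, ww, hD⟩

end Ausl

section Step

lemma step_lemma {M : C} (hM : ∀ k : ℤ, 0 < k → ∀ f : M ⟶ M⟦k⟧, f = 0) {Y V : C}
    (s : Y ⟶ V) (p : V ⟶ Y) (hsp : s ≫ p = 𝟙 Y) (hV : V ∈ auslanderClass M) :
    ∃ (N Y' : C), inAdd M N ∧ Y' ∈ rightPerp M ∧
      (∃ (V' : C) (s' : Y' ⟶ V') (p' : V' ⟶ Y'), s' ≫ p' = 𝟙 Y' ∧ V' ∈ auslanderClass M) ∧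
      ∃ (u' : Y' ⟶ N) (v' : N ⟶ Y) (w' : Y ⟶ Y'⟦(1 : ℤ)⟧),
        Triangle.mk u' v' w' ∈ distTriang C := by
  obtain ⟨Xs, h0, hXs⟩ := hV
  subst h0
  obtain ⟨hperp0, M₀, hM₀, u, v, w, hT⟩ := hXs 0
  have hperp1 : Xs 1 ∈ rightPerp M := (hXs 1).1
  have hY : Y ∈ rightPerp M := retract_rightPerp s p hsp hperp0
  obtain ⟨Y', a', c', hT2⟩ := distinguished_cocone_triangle₁ (v ≫ p)
  -- surjectivity of `Hom(M, M₀) → Hom(M, Y)`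
  have hsurj : ∀ g : M ⟶ Y, ∃ h : M ⟶ M₀, h ≫ (v ≫ p) = g := by
    intro g
    obtain ⟨h, hh⟩ := Triangle.coyoneda_exact₃ _ hT (g ≫ s)
      (by erw [Category.assoc]; exact hperp1 1 one_pos _)
    refine ⟨h, ?_⟩
    dsimp at hh
    erw [← Category.assoc, ← hh, Category.assoc, hsp, Category.comp_id]
  have hMperp : M₀ ∈ rightPerp M := inAdd_mem_rightPerp hM hM₀
  have hperpY' : Y' ∈ rightPerp M := rightPerp_two_of_three hT2 hMperp hY hsurj
  -- construction of `φ : Xs 1 ⟶ Y'`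
  obtain ⟨c1, hc1a, _⟩ := complete_distinguished_triangle_morphism
    ((Triangle.mk u v w).rotate) ((Triangle.mk a' (v ≫ p) c').rotate)
    (rot_of_distTriang _ hT) (rot_of_distTriang _ hT2) (𝟙 M₀) p
    (by dsimp; erw [Category.id_comp]; rfl)
  dsimp at hc1a
  set φ : Xs 1 ⟶ Y' := (shiftFunctor C (1 : ℤ)).preimage c1 with hφdef
  have hφ1 : w ≫ (shiftFunctor C (1 : ℤ)).map φ = p ≫ c' := by
    erw [hφdef, Functor.map_preimage]; exact hc1a
  -- construction of `ψ : Y' ⟶ Xs 1`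
  obtain ⟨g, hg⟩ := Triangle.coyoneda_exact₃ _ hT ((v ≫ p) ≫ s)
    (hom_from_inAdd_eq_zero hM₀ hperp1 one_pos _)
  dsimp at hg
  obtain ⟨c2, hc2a, _⟩ := complete_distinguished_triangle_morphism
    ((Triangle.mk a' (v ≫ p) c').rotate) ((Triangle.mk u v w).rotate)
    (rot_of_distTriang _ hT2) (rot_of_distTriang _ hT) g s (by dsimp; exact hg)
  dsimp at hc2a
  set ψ : Y' ⟶ Xs 1 := (shiftFunctor C (1 : ℤ)).preimage c2 with hψdef
  have hψ1 : c' ≫ (shiftFunctor C (1 : ℤ)).map ψ = s ≫ w := by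
    erw [hψdef, Functor.map_preimage]; exact hc2a
  -- the key vanishing
  have hkey : c' ≫ (shiftFunctor C (1 : ℤ)).map (𝟙 Y' - ψ ≫ φ) = 0 := by
    rw [Functor.map_sub, CategoryTheory.Functor.map_id, Preadditive.comp_sub, Category.comp_id,
      Functor.map_comp, ← Category.assoc, hψ1, Category.assoc, hφ1, ← Category.assoc, hsp,
      Category.id_comp, sub_self]
  -- factor `𝟙 Y' - ψ ≫ φ` through `a'`
  obtain ⟨t1, ht1⟩ := Triangle.yoneda_exact₃ _ (rot_of_distTriang _ hT2)
    ((shiftFunctor C (1 : ℤ)).map (𝟙 Y' - ψ ≫ φ)) hkey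
  set t : M₀ ⟶ Y' := (shiftFunctor C (1 : ℤ)).preimage (-t1) with htdef
  have ht : a' ≫ t = 𝟙 Y' - ψ ≫ φ := by
    apply (shiftFunctor C (1 : ℤ)).map_injective
    erw [Functor.map_comp, htdef, Functor.map_preimage, ht1, Preadditive.comp_neg,
      Preadditive.neg_comp]; rfl
  -- the retraction
  have hretr : biprod.lift ψ a' ≫ biprod.desc φ t = 𝟙 Y' := by
    rw [biprod.lift_desc, ht]
    abel
  have hXs1 : Xs 1 ∈ auslanderClass M := ⟨fun i => Xs (i + 1), rfl, fun i => hXs (i + 1)⟩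
  exact ⟨M₀, Y', hM₀, hperpY', ⟨Xs 1 ⊞ M₀, biprod.lift ψ a', biprod.desc φ t, hretr,
    ausl_biprod hXs1 (inAdd_mem_ausl hM hM₀)⟩, a', v ≫ p, c', hT2⟩

end Step

section Main

lemma mem_of_retract {M U V : C} (hM : ∀ k : ℤ, 0 < k → ∀ f : M ⟶ M⟦k⟧, f = 0)
    (s : U ⟶ V) (p : V ⟶ U) (hsp : s ≫ p = 𝟙 U)
    (hV : V ∈ auslanderClass M) : U ∈ auslanderClass M := by
  have step' : ∀ Y : C, ∃ Y' : C,
      (∃ (W : C) (a : Y ⟶ W) (b : W ⟶ Y), a ≫ b = 𝟙 Y ∧ W ∈ auslanderClass M) →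
      ((∃ (W : C) (a : Y' ⟶ W) (b : W ⟶ Y'), a ≫ b = 𝟙 Y' ∧ W ∈ auslanderClass M) ∧
        Y ∈ rightPerp M ∧
        ∃ (N : C), inAdd M N ∧ ∃ (u' : Y' ⟶ N) (v' : N ⟶ Y) (w' : Y ⟶ Y'⟦(1 : ℤ)⟧),
          Triangle.mk u' v' w' ∈ distTriang C) := by
    intro Y
    by_cases hY : ∃ (W : C) (a : Y ⟶ W) (b : W ⟶ Y), a ≫ b = 𝟙 Y ∧ W ∈ auslanderClass M
    · obtain ⟨W, a, b, hab, hW⟩ := hY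
      obtain ⟨N, Y', hN, _, hP', rest⟩ := step_lemma hM a b hab hW
      exact ⟨Y', fun _ => ⟨hP',
        retract_rightPerp a b hab (mem_rightPerp_of_mem_ausl hW), N, hN, rest⟩⟩
    · exact ⟨Y, fun h => absurd h hY⟩
  choose nxt hnxt using step'
  let Ys : ℕ → C := fun n => nxt^[n] U
  have hiter : ∀ n, Ys (n + 1) = nxt (Ys n) := fun n => Function.iterate_succ_apply' nxt n U
  have hP : ∀ n, ∃ (W : C) (a : Ys n ⟶ W) (b : W ⟶ Ys n),
      a ≫ b = 𝟙 (Ys n) ∧ W ∈ auslanderClass M := by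
    intro n
    induction n with
    | zero => exact ⟨V, s, p, hsp, hV⟩
    | succ n ih =>
      rw [hiter n]
      exact (hnxt (Ys n) ih).1
  refine ⟨Ys, rfl, fun i => ?_⟩
  have h := hnxt (Ys i) (hP i)
  refine ⟨h.2.1, ?_⟩
  obtain ⟨N, hN, u', v', w', hdist⟩ := h.2.2
  rw [hiter i]
  exact ⟨N, hN, u', v', w', hdist⟩

end Main

/-- if `M` is semi-selforthogonal, the class `X = auslanderClass M` is
closed under direct summands: if `V ≅ U ⊞ W` belongs to `X` then so do `U` and `W`. -/
theorem stmt5 (M : C)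
    (hM : ∀ k : ℤ, 0 < k → ∀ f : M ⟶ M⟦k⟧, f = 0)
    (U V W : C) (e : V ≅ U ⊞ W) (hV : V ∈ auslanderClass M) :
    U ∈ auslanderClass M ∧ W ∈ auslanderClass M := by
  constructor
  · exact mem_of_retract hM (biprod.inl ≫ e.inv) (e.hom ≫ biprod.fst) (by simp) hV
  · exact mem_of_retract hM (biprod.inr ≫ e.inv) (e.hom ≫ biprod.snd) (by simp) hV
end

section
/- Let C be a full subcategory of a triangulated category that is resolving (closed under extensions and under [-1]) and closed under direct summands. Then the subcategory ⟨C⟩_+ := { X | X ≅ C[n] for some C ∈ C and some integer n ≥ 0 } is a triangulated subcategory (closed under [1], [-1], and extensions) closed under direct summands. -/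
open CategoryTheory Limits Pretriangulated

universe v u

variable {C : Type u} [Category.{v} C] [Preadditive C] [HasZeroObject C]
  [HasShift C ℤ] [∀ n : ℤ, (shiftFunctor C n).Additive] [Pretriangulated C]

/-- `⟨S⟩₊`: objects isomorphic to `Y⟦n⟧` for some `Y ∈ S` and some integer `n ≥ 0`. -/
def plusClosure (S : Set C) : Set C :=
  {X : C | ∃ Y ∈ S, ∃ n : ℕ, Nonempty (X ≅ Y⟦(n : ℤ)⟧)}

def shiftShiftIso (X : C) (a b c : ℤ) (h : a + b = c) : X⟦a⟧⟦b⟧ ≅ X⟦c⟧ :=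
  ((shiftFunctorAdd' C a b c h).app X).symm

lemma negShiftMem (S : Set C)
    (hiso : ∀ (X Y : C), (X ≅ Y) → X ∈ S → Y ∈ S)
    (hshift : ∀ X : C, X ∈ S → X⟦(-1 : ℤ)⟧ ∈ S)
    (m : ℕ) (X : C) (hX : X ∈ S) : X⟦(-(m : ℤ))⟧ ∈ S := by
  induction m with
  | zero =>
    exact hiso X _ (((shiftFunctorZero' C (-((0:ℕ):ℤ)) (by norm_num)).app X).symm) hX
  | succ k ih =>
    exact hiso _ _ (shiftShiftIso X (-(k : ℤ)) (-1) _ (by push_cast; ring)) (hshift _ ih)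

/-- key: if X ≅ Y⟦n⟧ with Y ∈ S and n ≤ N, then X⟦-N⟧ ∈ S. -/
lemma memDownShift (S : Set C)
    (hiso : ∀ (X Y : C), (X ≅ Y) → X ∈ S → Y ∈ S)
    (hshift : ∀ X : C, X ∈ S → X⟦(-1 : ℤ)⟧ ∈ S)
    (X Y : C) (hY : Y ∈ S) (n N : ℕ) (hn : n ≤ N) (e : X ≅ Y⟦(n : ℤ)⟧) :
    X⟦(-(N : ℤ))⟧ ∈ S := by
  have h1 : Y⟦(-((N - n : ℕ) : ℤ))⟧ ∈ S := negShiftMem S hiso hshift _ Y hY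
  refine hiso _ _ ?_ h1
  exact (shiftShiftIso Y ((n : ℤ)) (-(N : ℤ)) (-((N - n : ℕ) : ℤ)) (by
      push_cast [Nat.cast_sub hn]; ring)).symm ≪≫
    ((shiftFunctor C (-(N : ℤ))).mapIso e).symm

/-- if `S` is resolving (extension closed and closed under `⟦-1⟧`),
contains the zero objects, is closed under isomorphisms and under direct summands,
then `⟨S⟩₊` is a triangulated subcategory (closed under `⟦1⟧`, `⟦-1⟧` and extensions)
closed under direct summands. -/
theorem stmt6 (S : Set C)
    (hiso : ∀ (X Y : C), (X ≅ Y) → X ∈ S → Y ∈ S)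
    (hzero : ∀ X : C, IsZero X → X ∈ S)
    (hext : ∀ T ∈ distTriang C, T.obj₁ ∈ S → T.obj₃ ∈ S → T.obj₂ ∈ S)
    (hshift : ∀ X : C, X ∈ S → X⟦(-1 : ℤ)⟧ ∈ S)
    (hsum : ∀ (U V : C) (r : U ⟶ V) (s : V ⟶ U), s ≫ r = 𝟙 V → U ∈ S → V ∈ S) :
    (∀ X ∈ plusClosure S, X⟦(1 : ℤ)⟧ ∈ plusClosure S) ∧
    (∀ X ∈ plusClosure S, X⟦(-1 : ℤ)⟧ ∈ plusClosure S) ∧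
    (∀ T ∈ distTriang C,
      T.obj₁ ∈ plusClosure S → T.obj₃ ∈ plusClosure S → T.obj₂ ∈ plusClosure S) ∧
    (∀ (U V : C) (r : U ⟶ V) (s : V ⟶ U), s ≫ r = 𝟙 V →
      U ∈ plusClosure S → V ∈ plusClosure S) := by
  refine ⟨?_, ?_, ?_, ?_⟩
  · rintro X ⟨Y, hY, n, ⟨e⟩⟩
    exact ⟨Y, hY, n + 1, ⟨(shiftFunctor C (1 : ℤ)).mapIso e ≪≫
      shiftShiftIso Y (n : ℤ) 1 ((n + 1 : ℕ) : ℤ) (by push_cast; ring)⟩⟩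
  · rintro X ⟨Y, hY, n, ⟨e⟩⟩
    match n with
    | 0 =>
      refine ⟨Y⟦(-1 : ℤ)⟧, hshift Y hY, 0, ⟨?_⟩⟩
      exact (shiftFunctor C (-1 : ℤ)).mapIso e ≪≫
        shiftShiftIso Y (0 : ℤ) (-1) (-1) (by ring) ≪≫
        ((shiftFunctorZero' C ((0:ℕ):ℤ) (by norm_num)).app (Y⟦(-1 : ℤ)⟧)).symm
    | (k + 1) =>
      refine ⟨Y, hY, k, ⟨?_⟩⟩
      exact (shiftFunctor C (-1 : ℤ)).mapIso e ≪≫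
        shiftShiftIso Y ((k + 1 : ℕ) : ℤ) (-1) (k : ℤ) (by push_cast; ring)
  · rintro T hT ⟨Y₁, hY₁, n₁, ⟨e₁⟩⟩ ⟨Y₃, hY₃, n₃, ⟨e₃⟩⟩
    set N := max n₁ n₃ with hN
    have hT' := Triangle.shift_distinguished T hT (-(N : ℤ))
    have h2 : T.obj₂⟦(-(N : ℤ))⟧ ∈ S := by
      refine hext _ hT' ?_ ?_
      · exact memDownShift S hiso hshift _ _ hY₁ n₁ N (le_max_left _ _) e₁
      · exact memDownShift S hiso hshift _ _ hY₃ n₃ N (le_max_right _ _) e₃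
    exact ⟨_, h2, N, ⟨(shiftShiftIso T.obj₂ (-(N : ℤ)) (N : ℤ) 0 (by ring) ≪≫
      (shiftFunctorZero C ℤ).app T.obj₂).symm⟩⟩
  · rintro U V r s hrs ⟨Y, hY, n, ⟨e⟩⟩
    have hU : U⟦(-(n : ℤ))⟧ ∈ S :=
      memDownShift S hiso hshift U Y hY n n le_rfl e
    have hV : V⟦(-(n : ℤ))⟧ ∈ S := by
      refine hsum _ _ (r⟦(-(n : ℤ))⟧') (s⟦(-(n : ℤ))⟧') ?_ hU
      rw [← Functor.map_comp, hrs]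
      exact (shiftFunctor C (-(n : ℤ))).map_id V
    exact ⟨_, hV, n, ⟨(shiftShiftIso V (-(n : ℤ)) (n : ℤ) 0 (by ring) ≪≫
      (shiftFunctorZero C ℤ).app V).symm⟩⟩
end

section
/- Let C be a full subcategory of a triangulated category that is coresolving (closed under extensions and under [1]) and closed under direct summands. Then the subcategory ⟨C⟩_- := { X | X ≅ C[n] for some C ∈ C and some integer n ≤ 0 } is a triangulated subcategory closed under direct summands. -/
open CategoryTheory Limits Pretriangulated

universe v u

variable {C : Type u} [Category.{v} C] [Preadditive C] [HasZeroObject C]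
  [HasShift C ℤ] [∀ n : ℤ, (shiftFunctor C n).Additive] [Pretriangulated C]

/-- `⟨S⟩₋`: objects isomorphic to `Y⟦n⟧` for some `Y ∈ S` and some integer `n ≤ 0`. -/
def minusClosure (S : Set C) : Set C :=
  {X : C | ∃ Y ∈ S, ∃ n : ℤ, n ≤ 0 ∧ Nonempty (X ≅ Y⟦n⟧)}

/-- if `S` is coresolving (extension closed and closed under `⟦1⟧`),
contains the zero objects, is closed under isomorphisms and under direct summands,
then `⟨S⟩₋` is a triangulated subcategory closed under direct summands. -/
theorem stmt7 (S : Set C)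
    (hiso : ∀ (X Y : C), (X ≅ Y) → X ∈ S → Y ∈ S)
    (hzero : ∀ X : C, IsZero X → X ∈ S)
    (hext : ∀ T ∈ distTriang C, T.obj₁ ∈ S → T.obj₃ ∈ S → T.obj₂ ∈ S)
    (hshift : ∀ X : C, X ∈ S → X⟦(1 : ℤ)⟧ ∈ S)
    (hsum : ∀ (U V : C) (r : U ⟶ V) (s : V ⟶ U), s ≫ r = 𝟙 V → U ∈ S → V ∈ S) :
    (∀ X ∈ minusClosure S, X⟦(1 : ℤ)⟧ ∈ minusClosure S) ∧
    (∀ X ∈ minusClosure S, X⟦(-1 : ℤ)⟧ ∈ minusClosure S) ∧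
    (∀ T ∈ distTriang C,
      T.obj₁ ∈ minusClosure S → T.obj₃ ∈ minusClosure S → T.obj₂ ∈ minusClosure S) ∧
    (∀ (U V : C) (r : U ⟶ V) (s : V ⟶ U), s ≫ r = 𝟙 V →
      U ∈ minusClosure S → V ∈ minusClosure S) := by
  -- closure of `S` under nonnegative shifts
  have hshiftN : ∀ (k : ℕ) (Y : C), Y ∈ S → Y⟦(k : ℤ)⟧ ∈ S := by
    intro k
    induction k with
    | zero =>
      intro Y hY
      exact hiso Y _ ((shiftFunctorZero C ℤ).symm.app Y) hY
    | succ k ih =>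
      intro Y hY
      exact hiso _ _ ((shiftFunctorAdd' C (k : ℤ) 1 ((k + 1 : ℕ) : ℤ) (by push_cast; ring)).symm.app Y)
        (hshift _ (ih Y hY))
  have hshiftZ : ∀ (m : ℤ), 0 ≤ m → ∀ Y : C, Y ∈ S → Y⟦m⟧ ∈ S := by
    intro m hm Y hY
    obtain ⟨k, rfl⟩ := Int.eq_ofNat_of_zero_le hm
    exact hshiftN k Y hY
  refine ⟨?_, ?_, ?_, ?_⟩
  · rintro X ⟨Y, hY, n, hn, ⟨e⟩⟩
    refine ⟨Y⟦(1 : ℤ)⟧, hshift Y hY, n, hn, ⟨?_⟩⟩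
    exact (shiftFunctor C (1 : ℤ)).mapIso e ≪≫
      (shiftFunctorAdd' C n 1 (n + 1) rfl).symm.app Y ≪≫
      (shiftFunctorAdd' C 1 n (n + 1) (by omega)).app Y
  · rintro X ⟨Y, hY, n, hn, ⟨e⟩⟩
    refine ⟨Y, hY, n - 1, by omega, ⟨?_⟩⟩
    exact (shiftFunctor C (-1 : ℤ)).mapIso e ≪≫
      (shiftFunctorAdd' C n (-1) (n - 1) (by omega)).symm.app Y
  · rintro T hT ⟨Y₁, hY₁, n₁, hn₁, ⟨e₁⟩⟩ ⟨Y₃, hY₃, n₃, hn₃, ⟨e₃⟩⟩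
    set n : ℤ := min n₁ n₃ with hn
    have hn0 : n ≤ 0 := le_trans (min_le_left _ _) hn₁
    have hT' := Triangle.shift_distinguished T hT (-n)
    have h1 : ((CategoryTheory.shiftFunctor (Triangle C) (-n)).obj T).obj₁ ∈ S := by
      refine hiso (Y₁⟦n₁ - n⟧) _ ?_ (hshiftZ _ (by omega) Y₁ hY₁)
      exact ((shiftFunctor C (-n)).mapIso e₁ ≪≫
        (shiftFunctorAdd' C n₁ (-n) (n₁ - n) (by omega)).symm.app Y₁).symm
    have h3 : ((CategoryTheory.shiftFunctor (Triangle C) (-n)).obj T).obj₃ ∈ S := by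
      refine hiso (Y₃⟦n₃ - n⟧) _ ?_ (hshiftZ _ (by omega) Y₃ hY₃)
      exact ((shiftFunctor C (-n)).mapIso e₃ ≪≫
        (shiftFunctorAdd' C n₃ (-n) (n₃ - n) (by omega)).symm.app Y₃).symm
    have h2 := hext _ hT' h1 h3
    refine ⟨T.obj₂⟦(-n)⟧, h2, n, hn0, ⟨?_⟩⟩
    exact (shiftFunctorCompIsoId C (-n) n (by omega)).symm.app T.obj₂
  · rintro U V r s hrs ⟨Y, hY, n, hn, ⟨e⟩⟩
    have i : U⟦(-n)⟧ ≅ Y :=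
      (shiftFunctor C (-n)).mapIso e ≪≫ (shiftFunctorCompIsoId C n (-n) (by omega)).app Y
    have hV : V⟦(-n)⟧ ∈ S := by
      refine hsum Y (V⟦(-n)⟧) (i.inv ≫ (shiftFunctor C (-n)).map r)
        ((shiftFunctor C (-n)).map s ≫ i.hom) ?_ hY
      rw [Category.assoc, ← Category.assoc i.hom, i.hom_inv_id, Category.id_comp,
        ← Functor.map_comp, hrs]
      exact (shiftFunctor C (-n)).map_id V
    refine ⟨V⟦(-n)⟧, hV, n, hn, ⟨?_⟩⟩
    exact (shiftFunctorCompIsoId C (-n) n (by omega)).symm.app V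
end

section
/- Let M be a semi-selforthogonal object of a triangulated category D, and let X_M denote the class of X ∈ ^{⊥_{k>0}}M admitting triangles X_i → M_i → X_{i+1} → (i ≥ 0, X_0 = X) with M_i ∈ add(M) and all X_i ∈ ^{⊥_{k>0}}M. Suppose X ∈ ^{⊥_{k>0}}M and X[-n] ∈ X_M for some n ≥ 0. Then X ∈ X_M. Equivalently, ^{⊥_{k>0}}M ∩ ⟨X_M⟩_+ = X_M. -/
open CategoryTheory Limits Pretriangulated

universe v u

variable {C : Type u} [Category.{v} C] [Preadditive C] [HasZeroObject C]
  [HasShift C ℤ] [∀ n : ℤ, (shiftFunctor C n).Additive] [Pretriangulated C]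
  [HasFiniteBiproducts C]

/-- `^{⊥_{k>0}}M`. -/
def leftPerp (M : C) : Set C :=
  {N : C | ∀ k : ℤ, 0 < k → ∀ f : N ⟶ M⟦k⟧, f = 0}

/-- The co-Auslander class `X_M`: objects `X ∈ ^{⊥_{k>0}}M` admitting triangles
`X_i → M_i → X_{i+1} →` (`X_0 = X`) with `M_i ∈ add M` and all `X_i ∈ ^{⊥_{k>0}}M`. -/
def coAuslanderClass (M : C) : Set C :=
  {X : C | ∃ Xs : ℕ → C, Xs 0 = X ∧ ∀ i : ℕ, Xs i ∈ leftPerp M ∧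
    ∃ (Mi : C) (_ : inAdd M Mi) (u : Xs i ⟶ Mi) (v : Mi ⟶ Xs (i + 1))
      (w : Xs (i + 1) ⟶ (Xs i)⟦(1 : ℤ)⟧), Triangle.mk u v w ∈ distTriang C}

section MyAux

set_option linter.unusedSectionVars false

variable (M : C)

lemma my_leftPerp_of_iso {X Y : C} (e : X ≅ Y) (hY : Y ∈ leftPerp M) : X ∈ leftPerp M := by
  intro k hk f
  have h : e.inv ≫ f = 0 := hY k hk _
  calc f = e.hom ≫ (e.inv ≫ f) := by simp
  _ = 0 := by rw [h, comp_zero]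

lemma my_leftPerp_shift {X : C} (hX : X ∈ leftPerp M) (m : ℤ) (hm : 0 ≤ m) :
    X⟦-m⟧ ∈ leftPerp M := by
  intro k hk f
  have h : (shiftNegShift X m).inv ≫ (shiftFunctor C m).map f ≫
      ((shiftFunctorAdd' C k m (k + m) rfl).app M).inv = 0 := hX (k + m) (by omega) _
  apply (shiftFunctor C m).map_injective
  rw [Functor.map_zero,
    show (shiftFunctor C m).map f = (shiftNegShift X m).hom ≫
      ((shiftNegShift X m).inv ≫ (shiftFunctor C m).map f ≫
        ((shiftFunctorAdd' C k m (k + m) rfl).app M).inv) ≫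
      ((shiftFunctorAdd' C k m (k + m) rfl).app M).hom from by
        rw [Category.assoc, Category.assoc, Iso.inv_hom_id, Category.comp_id,
          Iso.hom_inv_id_assoc], h]
  rw [zero_comp, comp_zero]

lemma my_zero_to_add {X N : C} (hX : X ∈ leftPerp M) (hN : inAdd M N) (m : ℤ) (hm : 0 < m)
    (g : X⟦-m⟧ ⟶ N) : g = 0 := by
  obtain ⟨r, s, p, hsp⟩ := hN
  have hc : ∀ j, g ≫ s ≫ biproduct.π (fun _ : Fin r => M) j = 0 := by
    intro j
    apply (shiftFunctor C m).map_injective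
    have h0 : (shiftNegShift X m).inv ≫
        (shiftFunctor C m).map (g ≫ s ≫ biproduct.π (fun _ : Fin r => M) j) = 0 :=
      hX m hm _
    rw [Functor.map_zero,
      show (shiftFunctor C m).map (g ≫ s ≫ biproduct.π (fun _ : Fin r => M) j) =
        (shiftNegShift X m).hom ≫ ((shiftNegShift X m).inv ≫
          (shiftFunctor C m).map (g ≫ s ≫ biproduct.π (fun _ : Fin r => M) j)) from by
              rw [Iso.hom_inv_id_assoc],
      h0]
    rw [comp_zero]
  have hgs : g ≫ s = 0 := by
    apply biproduct.hom_ext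
    intro j
    simpa using hc j
  calc g = (g ≫ s) ≫ p := by rw [Category.assoc, hsp, Category.comp_id]
  _ = 0 := by rw [hgs, zero_comp]

lemma my_inAdd_of_summand {N B : C} (h : inAdd M N) (s : B ⟶ N) (p : N ⟶ B)
    (hsp : s ≫ p = 𝟙 B) : inAdd M B := by
  obtain ⟨r, σ, π, hσπ⟩ := h
  exact ⟨r, s ≫ σ, π ≫ p, by
    rw [Category.assoc, ← Category.assoc σ, hσπ, Category.id_comp, hsp]⟩

lemma my_dist_of_iso₁ {X Y Z W : C} (e : X ≅ Y) (u : Y ⟶ Z) (v : Z ⟶ W) (w : W ⟶ Y⟦(1 : ℤ)⟧)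
    (hT : Triangle.mk u v w ∈ distTriang C) :
    Triangle.mk (e.hom ≫ u) v (w ≫ e.inv⟦(1 : ℤ)⟧') ∈ distTriang C :=
  isomorphic_distinguished _ hT _
    (Triangle.isoMk _ _ e (Iso.refl _) (Iso.refl _) (Category.comp_id _)
      ((Category.comp_id _).trans (Category.id_comp _).symm)
      (by change (w ≫ e.inv⟦(1 : ℤ)⟧') ≫ e.hom⟦(1 : ℤ)⟧' = 𝟙 W ≫ w
          rw [Category.assoc, ← Functor.map_comp, e.inv_hom_id, CategoryTheory.Functor.map_id,
        Category.comp_id]; exact (Category.id_comp _).symm))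

lemma my_split_of_mor₁_zero {Z N W : C} (v : N ⟶ W) (w : W ⟶ Z⟦(1 : ℤ)⟧)
    (hT : Triangle.mk (0 : Z ⟶ N) v w ∈ distTriang C) :
    Nonempty (W ≅ N ⊞ Z⟦(1 : ℤ)⟧) := by
  obtain ⟨e, -, -⟩ := exists_iso_binaryBiproduct_of_distTriang _ (rot_of_distTriang _ hT)
    (by change -((shiftFunctor C (1 : ℤ)).map (0 : Z ⟶ N)) = 0
        rw [Functor.map_zero, neg_zero])
  exact ⟨e⟩

lemma my_summand_triangle {Z N W B A : C} (u : Z ⟶ N) (v : N ⟶ W) (w : W ⟶ Z⟦(1 : ℤ)⟧)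
    (hT : Triangle.mk u v w ∈ distTriang C) (e : B ⊞ A ≅ Z)
    (hB : ∀ g : W⟦(-1 : ℤ)⟧ ⟶ B, g = 0) :
    ∃ (D : C) (s : D ⟶ N) (p : N ⟶ D) (_ : s ≫ p = 𝟙 D)
      (u' : A ⟶ D) (v' : D ⟶ W) (w' : W ⟶ A⟦(1 : ℤ)⟧),
      Triangle.mk u' v' w' ∈ distTriang C := by
  have hT' : Triangle.mk (e.hom ≫ u) v (w ≫ e.inv⟦(1 : ℤ)⟧') ∈ distTriang C :=
    my_dist_of_iso₁ e u v w hT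
  set T' : Triangle C := Triangle.mk (e.hom ≫ u) v (w ≫ e.inv⟦(1 : ℤ)⟧') with hT'def
  have hT'' : T'.invRotate ∈ distTriang C := inv_rot_of_distTriang _ hT'
  set q : W⟦(-1 : ℤ)⟧ ⟶ B ⊞ A := T'.invRotate.mor₁ with hqdef
  have hq0 : q ≫ biprod.fst = 0 := hB _
  have hfac : (q ≫ biprod.snd) ≫ biprod.inr = q := by
    apply biprod.hom_ext
    · simp [hq0]
    · simp
  obtain ⟨D, g, h, hT₃⟩ := distinguished_cocone_triangle (q ≫ biprod.snd)
  have hcomm₁ : (Triangle.mk (q ≫ biprod.snd) g h).mor₁ ≫ biprod.inr =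
      𝟙 _ ≫ T'.invRotate.mor₁ := by
    rw [Category.id_comp, ← hqdef]
    exact hfac
  obtain ⟨s, hs₂, hs₃⟩ : ∃ s : D ⟶ N, g ≫ s = biprod.inr ≫ e.hom ≫ u ∧
      h = s ≫ v ≫ (shiftFunctorCompIsoId C (-1 : ℤ) 1 (by norm_num)).inv.app W := by
    obtain ⟨s, hs₂, hs₃⟩ :=
      complete_distinguished_triangle_morphism _ _ hT₃ hT'' (𝟙 _) biprod.inr hcomm₁
    refine ⟨s, hs₂, ?_⟩
    change h ≫ (shiftFunctor C (1 : ℤ)).map (𝟙 ((shiftFunctor C (-1 : ℤ)).obj W)) = _ at hs₃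
    rw [CategoryTheory.Functor.map_id, Category.comp_id] at hs₃
    exact hs₃
  have hcomm₂ : T'.invRotate.mor₁ ≫ biprod.snd =
      𝟙 _ ≫ (Triangle.mk (q ≫ biprod.snd) g h).mor₁ := by
    rw [Category.id_comp, ← hqdef]
    rfl
  obtain ⟨p, hp₂, hp₃⟩ : ∃ p : N ⟶ D, (e.hom ≫ u) ≫ p = biprod.snd ≫ g ∧
      v ≫ (shiftFunctorCompIsoId C (-1 : ℤ) 1 (by norm_num)).inv.app W = p ≫ h := by
    obtain ⟨p, hp₂, hp₃⟩ :=
      complete_distinguished_triangle_morphism _ _ hT'' hT₃ (𝟙 _) biprod.snd hcomm₂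
    refine ⟨p, hp₂, ?_⟩
    change _ ≫ (shiftFunctor C (1 : ℤ)).map (𝟙 ((shiftFunctor C (-1 : ℤ)).obj W)) = _ at hp₃
    rw [CategoryTheory.Functor.map_id] at hp₃
    erw [Category.comp_id] at hp₃
    exact hp₃
  -- endomorphism of the triangle T₃ with hom₁ = hom₂ = 𝟙
  have hendo₂ : g ≫ s ≫ p = g := by
    rw [← Category.assoc, hs₂, Category.assoc, hp₂, ← Category.assoc]
    simp
  have hendo₃ : (s ≫ p) ≫ h = h := by
    rw [Category.assoc, ← hp₃, ← hs₃]
  let φ : Triangle.mk (q ≫ biprod.snd) g h ⟶ Triangle.mk (q ≫ biprod.snd) g h :=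
    { hom₁ := 𝟙 _
      hom₂ := 𝟙 _
      hom₃ := s ≫ p
      comm₁ := (Category.comp_id _).trans (Category.id_comp _).symm
      comm₂ := hendo₂.trans (Category.id_comp _).symm
      comm₃ := by
        erw [CategoryTheory.Functor.map_id, Category.comp_id]
        exact hendo₃.symm }
  have hiso : IsIso (s ≫ p) := isIso₃_of_isIso₁₂ φ hT₃ hT₃ inferInstance inferInstance
  refine ⟨D, s, p ≫ inv (s ≫ p), by rw [← Category.assoc, IsIso.hom_inv_id], g,
    h ≫ (shiftNegShift W (1 : ℤ)).hom,
    (shiftNegShift W (1 : ℤ)).inv ≫ (Triangle.mk (q ≫ biprod.snd) g h).rotate.mor₃, ?_⟩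
  refine isomorphic_distinguished _ (rot_of_distTriang _ hT₃) _ ?_
  refine Triangle.isoMk _ _ (Iso.refl _) (Iso.refl _) (shiftNegShift W (1 : ℤ)).symm
    ((Category.comp_id _).trans (Category.id_comp _).symm)
    (by change (h ≫ (shiftNegShift W (1 : ℤ)).hom) ≫ (shiftNegShift W (1 : ℤ)).inv = 𝟙 D ≫ h
        rw [Category.assoc, Iso.hom_inv_id, Category.comp_id, Category.id_comp])
    (by change ((shiftNegShift W (1 : ℤ)).inv ≫ (-((shiftFunctor C (1 : ℤ)).map (q ≫ biprod.snd)))) ≫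
          (shiftFunctor C (1 : ℤ)).map (𝟙 A) =
          (shiftNegShift W (1 : ℤ)).inv ≫ (-((shiftFunctor C (1 : ℤ)).map (q ≫ biprod.snd)))
        rw [CategoryTheory.Functor.map_id, Category.comp_id])

lemma my_coAus_of_iso {X Y : C} (e : X ≅ Y) (hY : Y ∈ coAuslanderClass M) :
    X ∈ coAuslanderClass M := by
  obtain ⟨Ys, h0, hYs⟩ := hY
  refine ⟨fun i => match i with | 0 => X | (j + 1) => Ys (j + 1), rfl, fun i => ?_⟩
  match i with
  | 0 =>
    obtain ⟨hperp, M₀, hM₀, u, v, w, ht⟩ := hYs 0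
    have e₀ : X ≅ Ys 0 := e ≪≫ (eqToIso h0).symm
    exact ⟨my_leftPerp_of_iso M e₀ hperp, M₀, hM₀, e₀.hom ≫ u, v, w ≫ e₀.inv⟦(1 : ℤ)⟧',
      my_dist_of_iso₁ e₀ u v w ht⟩
  | (j + 1) => exact hYs (j + 1)

end MyAux

/-- for a semi-selforthogonal `M`, if `X ∈ ^{⊥_{k>0}}M` and
`X⟦-n⟧ ∈ X_M` for some `n ≥ 0`, then `X ∈ X_M`; equivalently
`^{⊥_{k>0}}M ∩ ⟨X_M⟩₊ = X_M`. -/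
theorem stmt9 (M : C)
    (hM : ∀ k : ℤ, 0 < k → ∀ f : M ⟶ M⟦k⟧, f = 0) :
    (∀ (X : C) (n : ℕ), X ∈ leftPerp M → X⟦(-(n : ℤ))⟧ ∈ coAuslanderClass M →
      X ∈ coAuslanderClass M) ∧
    leftPerp M ∩ plusClosure (coAuslanderClass M) = coAuslanderClass M := by
  have part1 : ∀ (X : C) (n : ℕ), X ∈ leftPerp M → X⟦(-(n : ℤ))⟧ ∈ coAuslanderClass M →
      X ∈ coAuslanderClass M := by
    intro X n hX
    induction n with
    | zero =>
      intro h
      simp only [Nat.cast_zero, neg_zero] at h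
      exact my_coAus_of_iso M ((shiftFunctorZero C ℤ).symm.app X) h
    | succ n ih =>
      intro h
      simp only [Nat.cast_succ] at h
      obtain ⟨Zs, hZ0, hZ⟩ := h
      obtain ⟨hp0, M₀, hM₀, u₀, v₀, w₀, ht0⟩ := hZ 0
      obtain ⟨hp1, M₁, hM₁, u₁, v₁, w₁, ht1⟩ := hZ 1
      have hp2 := (hZ 2).1
      have e₀ : Zs 0 ≅ X⟦(-((n : ℤ) + 1))⟧ := eqToIso hZ0
      have hu₀ : u₀ = 0 := by
        have hz : e₀.inv ≫ u₀ = 0 := my_zero_to_add M hX hM₀ ((n : ℤ) + 1) (by omega) _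
        calc u₀ = e₀.hom ≫ (e₀.inv ≫ u₀) := by simp
        _ = 0 := by rw [hz, comp_zero]
      rw [hu₀] at ht0
      obtain ⟨ψ⟩ := my_split_of_mor₁_zero v₀ w₀ ht0
      have ρ : (Zs 0)⟦(1 : ℤ)⟧ ≅ X⟦(-(n : ℤ))⟧ :=
        (shiftFunctor C (1 : ℤ)).mapIso e₀ ≪≫
          ((shiftFunctorAdd' C (-((n : ℤ) + 1)) 1 (-(n : ℤ)) (by ring)).app X).symm
      have e₁ : M₀ ⊞ X⟦(-(n : ℤ))⟧ ≅ Zs 1 :=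
        (ψ ≪≫ biprod.mapIso (Iso.refl M₀) ρ).symm
      obtain ⟨D, s, p, hsp, u', v', w', hdist⟩ :=
        my_summand_triangle u₁ v₁ w₁ ht1 e₁ (fun g => my_zero_to_add M hp2 hM₀ 1 one_pos g)
      have hnew : X⟦(-(n : ℤ))⟧ ∈ coAuslanderClass M := by
        refine ⟨fun i => match i with
          | 0 => X⟦(-(n : ℤ))⟧
          | (j + 1) => Zs (j + 2), rfl, fun i => ?_⟩
        match i with
        | 0 =>
          exact ⟨my_leftPerp_shift M hX (n : ℤ) (by omega), D,
            my_inAdd_of_summand M hM₁ s p hsp, u', v', w', hdist⟩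
        | (j + 1) => exact ⟨(hZ (j + 2)).1, (hZ (j + 2)).2⟩
      exact ih hnew
  refine ⟨part1, ?_⟩
  ext X
  constructor
  · rintro ⟨hperp, Y, hY, n, ⟨e⟩⟩
    refine part1 X n hperp (my_coAus_of_iso M ?_ hY)
    exact (shiftFunctor C (-(n : ℤ))).mapIso e ≪≫
      ((shiftFunctorCompIsoId C (n : ℤ) (-(n : ℤ)) (by ring)).app Y)
  · intro hX
    refine ⟨?_, X, hX, 0, ⟨?_⟩⟩
    · obtain ⟨Xs, h0, hall⟩ := hX
      exact h0 ▸ (hall 0).1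
    · simp only [Nat.cast_zero]
      exact (shiftFunctorZero C ℤ).symm.app X
end
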